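/- Let V be a finite-dimensional k-vector space, W ⊆ V a subspace, and U ⊆ P(V) a locally closed subset such that U ∩ P(W) is non-empty and open in P(W). If φ : U → P^m is a homogeneous morphism with defining system (f₀, …, f_m) consisting of homogeneous polynomials of degree d on V, then deg(φ|_{U ∩ P(W)}) = d − deg(gcd(f₀|_W, …, f_m|_W)). -/

import Mathlib

noncomputable section

namespace ElemAb

variable (p : ℕ) (k : Type) [Field k]

/-- The algebra of polynomial functions on a `k`-vector space `V`: the subalgebra of
`V → k` generated by the linear functionals. -/
def polyFuns (V : Type) [AddCommGroup V] [Module k V] : Subalgebra k (V → k) :=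
  Algebra.adjoin k {f : V → k | ∃ φ : V →ₗ[k] k, f = ⇑φ}

/-- The Zariski topology on a `k`-vector space: the topology generated by the complements of
zero sets of polynomial functions. -/
def zar (V : Type) [AddCommGroup V] [Module k V] : TopologicalSpace V :=
  TopologicalSpace.generateFrom {U | ∃ f ∈ polyFuns k V, U = {x | f x ≠ 0}}

variable (L : Type) [LieRing L] [LieAlgebra k L]

/-- A restricted Lie algebra structure (`p`-map) on the Lie algebra `L`:  a map
`x ↦ x^[p]` having the formal properties of a `p`-th power map, namely
`(t • x)^[p] = t^p • x^[p]`, additivity on commuting elements (and, in general, additivity up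
to a correction term lying in the subalgebra generated by the two elements), and
`ad (x^[p]) = (ad x)^p`. -/
structure pStructure : Type where
  pmap : L → L
  pmap_smul : ∀ (t : k) (x : L), pmap (t • x) = t ^ p • pmap x
  pmap_add_of_comm : ∀ x y : L, ⁅x, y⁆ = 0 → pmap (x + y) = pmap x + pmap y
  pmap_add_mem : ∀ x y : L, pmap (x + y) - pmap x - pmap y ∈ LieSubalgebra.lieSpan k L {x, y}
  ad_pmap : ∀ x y : L, ⁅pmap x, y⁆ = ((LieAlgebra.ad k L x) ^ p) y

variable {p k L}

/-- The (restricted) nullcone `V(g) = {x | x^[p] = 0}`. -/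
def pStructure.null (P : pStructure p k L) : Set L := {x | P.pmap x = 0}

/-- A submodule is an elementary abelian subalgebra if it is abelian (hence a subalgebra) and
the `p`-map vanishes on it. -/
def pStructure.IsElemAbelian (P : pStructure p k L) (e : Submodule k L) : Prop :=
  (∀ x ∈ e, ∀ y ∈ e, ⁅x, y⁆ = (0 : L)) ∧ ∀ x ∈ e, P.pmap x = 0

/-- `E(r, g)`: the `r`-dimensional elementary abelian subalgebras contained in the carrier
set `g` (take `g = Set.univ` for the whole algebra), as a set of submodules. -/
def pStructure.elemSet (P : pStructure p k L) (g : Set L) (r : ℕ) : Set (Submodule k L) :=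
  {e | (e : Set L) ⊆ g ∧ Module.finrank k ↥e = r ∧ P.IsElemAbelian e}

/-- Pairs of linearly independent vectors spanning a member of a given collection `C` of
two-dimensional subspaces. -/
def planePairs (C : Set (Submodule k L)) : Set (L × L) :=
  {z | LinearIndependent k ![z.1, z.2] ∧ Submodule.span k (Set.range ![z.1, z.2]) ∈ C}

/-- The canonical (quotient) map from spanning pairs to planes. -/
def planeMk (C : Set (Submodule k L)) (z : planePairs C) : ↥C :=
  ⟨Submodule.span k (Set.range ![z.val.1, z.val.2]), z.prop.2⟩

/-- The Zariski topology on a collection of two-dimensional subspaces (e.g. `E(2,g)` or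
`Gr₂(g)^{V(g)}`), defined as the quotient topology induced from the Zariski topology on the
variety of spanning pairs. -/
def planeTop (C : Set (Submodule k L)) : TopologicalSpace ↥C :=
  TopologicalSpace.coinduced (planeMk C)
    (TopologicalSpace.induced Subtype.val (zar k (L × L)))

/-- The statement that the projective variety `E(2, g)` is connected (the empty space counts
as connected). -/
def pStructure.EIsConnected (P : pStructure p k L) (g : Set L) : Prop :=
  @IsPreconnected ↥(P.elemSet g 2) (planeTop (P.elemSet g 2)) Set.univ

/-- `N_i(g) = {x | (ad x)^i = 0}`. -/
def Ncal (i : ℕ) : Set L := {x | (LieAlgebra.ad k L x) ^ i = 0}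

/-- The truncated exponential `exp x = ∑_{i<p} (ad x)^i / i!`. -/
def expAd (x : L) : Module.End k L :=
  ∑ i ∈ Finset.range p, (i.factorial : k)⁻¹ • ((LieAlgebra.ad k L x) ^ i)

/-- Automorphisms of the Lie algebra `L` (as linear endomorphisms). -/
def IsLieAut (f : Module.End k L) : Prop :=
  Function.Bijective f ∧ ∀ x y : L, f ⁅x, y⁆ = ⁅f x, f y⁆

/-- Automorphisms of the restricted Lie algebra `(L, [p])`, i.e. automorphisms commuting with
the `p`-map (the group `Aut_p(g)`). -/
def pStructure.IspAut (P : pStructure p k L) (f : Module.End k L) : Prop :=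
  IsLieAut f ∧ ∀ x : L, f (P.pmap x) = P.pmap (f x)

/-- A restricted Lie algebra is admissible if `N₃(g) ⊆ V(g)` and `exp(N₃(g)) ⊆ Aut_p(g)`. -/
def pStructure.IsAdmissible (P : pStructure p k L) : Prop :=
  Ncal (k := k) 3 ⊆ P.null ∧ ∀ x ∈ Ncal (k := k) (L := L) 3, P.IspAut (expAd (p := p) x)


section Proj

variable (k)

/-- The Zariski topology on the projective space `P(V)`, as the quotient topology from the
punctured affine space. -/
def projTop (V : Type) [AddCommGroup V] [Module k V] : TopologicalSpace (Projectivization k V) :=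
  TopologicalSpace.coinduced (Projectivization.mk' k)
    (TopologicalSpace.induced Subtype.val (zar k V))

variable {k}

variable {V : Type} [AddCommGroup V] [Module k V] [FiniteDimensional k V]

/-- Evaluation of a polynomial at the coordinates of `x` with respect to a fixed basis:
this realizes `MvPolynomial (Fin (dim V)) k` as the algebra `S(V^*)` of polynomial functions
on `V`. -/
def polyEval (f : MvPolynomial (Fin (Module.finrank k V)) k) (x : V) : k :=
  MvPolynomial.eval (fun i => (Module.finBasis k V).repr x i) f

/-- The restriction homomorphism `S(V^*) → S(W^*)` for a subspace `W ⊆ V` (in coordinates). -/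
def resW (W : Submodule k V) :
    MvPolynomial (Fin (Module.finrank k V)) k →ₐ[k]
      MvPolynomial (Fin (Module.finrank k ↥W)) k :=
  MvPolynomial.aeval (fun i => ∑ j : Fin (Module.finrank k ↥W),
    MvPolynomial.C ((Module.finBasis k V).repr ((Module.finBasis k ↥W j : ↥W) : V) i) *
      MvPolynomial.X j)

variable (k) in
/-- The subset of `P(V)` determined by a subset `S ⊆ V`, as a type. -/
def projOf (S : Set V) : Type :=
  {q : Projectivization k V // ∃ x, ∃ hx : x ≠ 0, x ∈ S ∧ Projectivization.mk k x hx = q}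

/-- `φ : P(S) → P^m` is a morphism of varieties: locally around every point it is given by a
system of homogeneous polynomials of a common degree. -/
def IsMorphismOn (S : Set V) (m : ℕ)
    (φ : projOf k S → Projectivization k (Fin (m + 1) → k)) : Prop :=
  ∀ q0 : projOf k S, ∃ U : Set (projOf k S),
    @IsOpen _ (TopologicalSpace.induced Subtype.val (projTop k V)) U ∧ q0 ∈ U ∧
    ∃ (d : ℕ) (F : Fin (m + 1) → MvPolynomial (Fin (Module.finrank k V)) k),
      (∀ i, (F i).IsHomogeneous d) ∧
      ∀ (x : V) (hx : x ≠ 0) (q : projOf k S), q ∈ U →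
        q.1 = Projectivization.mk k x hx →
        ∃ hF : (fun i => polyEval (F i) x) ≠ 0,
          φ q = Projectivization.mk k (fun i => polyEval (F i) x) hF

/-- The degree `deg (φ|_{P(v)})` of the restriction of `φ` to the projective line of a
two-dimensional subspace `v`: the common degree of a reduced homogeneous defining system of
`φ|_{P(v)}` in the coordinates of a basis of `v`. -/
noncomputable def planeDeg {S : Set V} (m : ℕ)
    (φ : projOf k S → Projectivization k (Fin (m + 1) → k)) (v : Submodule k V) : ℕ :=
  sSup {d | ∃ u w : V, u ∈ v ∧ w ∈ v ∧ LinearIndependent k ![u, w] ∧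
    ∃ F : Fin (m + 1) → MvPolynomial (Fin 2) k,
      (∀ i, (F i).IsHomogeneous d) ∧
      (∀ h : MvPolynomial (Fin 2) k, (∀ i, h ∣ F i) → IsUnit h) ∧
      ∀ (s t : k) (hx : s • u + t • w ≠ 0) (q : projOf k S),
        q.1 = Projectivization.mk k (s • u + t • w) hx →
        ∃ hF : (fun i => MvPolynomial.eval (![s, t] : Fin 2 → k) (F i)) ≠ 0,
          φ q = Projectivization.mk k (fun i => MvPolynomial.eval (![s, t] : Fin 2 → k) (F i)) hF}

end Proj
end ElemAb

open ElemAb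

open MvPolynomial in
lemma resW_eval {k : Type} [Field k] {V : Type} [AddCommGroup V] [Module k V]
    [FiniteDimensional k V] (W : Submodule k V)
    (f : MvPolynomial (Fin (Module.finrank k V)) k) (y : ↥W) :
    MvPolynomial.eval (fun j => (Module.finBasis k ↥W).repr y j) (resW W f)
      = polyEval f (y : V) := by
  set c : Fin (Module.finrank k ↥W) → k := fun j => (Module.finBasis k ↥W).repr y j with hc
  show eval c (aeval _ f) = _
  rw [aeval_def, algebraMap_eq, eval_eval₂]
  have hid : (eval c).comp (C : k →+* MvPolynomial (Fin (Module.finrank k ↥W)) k)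
      = RingHom.id k := by
    ext t; simp
  rw [hid, eval₂_id]
  unfold polyEval
  refine congrArg (fun g => eval g f) (funext fun i => ?_)
  have hy : (y : V) = ∑ j : Fin (Module.finrank k ↥W),
      c j • ((Module.finBasis k ↥W j : ↥W) : V) := by
    conv_lhs => rw [← Module.Basis.sum_repr (Module.finBasis k ↥W) y]
    push_cast
    rfl
  rw [hy]
  simp [map_sum, Finsupp.coe_finset_sum, Finset.sum_apply, mul_comm]

open MvPolynomial in
lemma isHomogeneous_of_mul_aux {σ K : Type*} [CommRing K] [IsDomain K]
    {a b : MvPolynomial σ K} {n : ℕ} (hab : (a * b).IsHomogeneous n)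
    (ha : a ≠ 0) (hb : b ≠ 0) :
    a.IsHomogeneous a.totalDegree ∧ b.IsHomogeneous b.totalDegree ∧
      a.totalDegree + b.totalDegree = n := by
  classical
  set Sa : Set ℕ := {i | homogeneousComponent i a ≠ 0} with hSa
  set Sb : Set ℕ := {i | homogeneousComponent i b ≠ 0} with hSb
  have hane : Sa.Nonempty := by
    by_contra h
    rw [Set.not_nonempty_iff_eq_empty] at h
    apply ha
    rw [← sum_homogeneousComponent a]
    refine Finset.sum_eq_zero fun i _ => ?_
    by_contra hi
    have : i ∈ Sa := hi
    simp [h] at this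
  have hbne : Sb.Nonempty := by
    by_contra h
    rw [Set.not_nonempty_iff_eq_empty] at h
    apply hb
    rw [← sum_homogeneousComponent b]
    refine Finset.sum_eq_zero fun i _ => ?_
    by_contra hi
    have : i ∈ Sb := hi
    simp [h] at this
  have hbdda : BddAbove Sa := by
    refine ⟨a.totalDegree, fun i hi => ?_⟩
    by_contra h
    exact hi (homogeneousComponent_eq_zero _ _ (lt_of_not_ge h))
  have hbddb : BddAbove Sb := by
    refine ⟨b.totalDegree, fun i hi => ?_⟩
    by_contra h
    exact hi (homogeneousComponent_eq_zero _ _ (lt_of_not_ge h))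
  set m₁ := sInf Sa with hm₁d; set m₂ := sSup Sa with hm₂d
  set n₁ := sInf Sb with hn₁d; set n₂ := sSup Sb with hn₂d
  have hm2 : m₂ ∈ Sa := Nat.sSup_mem hane hbdda
  have hn2 : n₂ ∈ Sb := Nat.sSup_mem hbne hbddb
  have hm1 : m₁ ∈ Sa := Nat.sInf_mem hane
  have hn1 : n₁ ∈ Sb := Nat.sInf_mem hbne
  have hm2le : m₂ ≤ a.totalDegree := by
    by_contra h
    exact hm2 (homogeneousComponent_eq_zero _ _ (lt_of_not_ge h))
  have hn2le : n₂ ≤ b.totalDegree := by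
    by_contra h
    exact hn2 (homogeneousComponent_eq_zero _ _ (lt_of_not_ge h))
  have haSa : ∀ i, i ∉ Sa → homogeneousComponent i a = 0 := by
    intro i hi; by_contra h; exact hi h
  have hbSb : ∀ i, i ∉ Sb → homogeneousComponent i b = 0 := by
    intro i hi; by_contra h; exact hi h
  -- key product formula
  have key : ∀ N : ℕ, homogeneousComponent N (a * b) =
      ∑ p ∈ Finset.range (a.totalDegree + 1) ×ˢ Finset.range (b.totalDegree + 1),
        if N = p.1 + p.2 then homogeneousComponent p.1 a * homogeneousComponent p.2 b
        else 0 := by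
    intro N
    conv_lhs => rw [← sum_homogeneousComponent a, ← sum_homogeneousComponent b]
    rw [Finset.sum_mul_sum, ← Finset.sum_product', map_sum]
    refine Finset.sum_congr rfl fun p _ => ?_
    have hmem : homogeneousComponent p.1 a * homogeneousComponent p.2 b ∈
        homogeneousSubmodule σ K (p.1 + p.2) :=
      (homogeneousComponent_isHomogeneous p.1 a).mul (homogeneousComponent_isHomogeneous p.2 b)
    rw [homogeneousComponent_of_mem hmem]
  have habmem : ∀ N, homogeneousComponent N (a * b) ≠ 0 → N = n := by
    intro N hN
    have : homogeneousComponent N (a * b) = if N = n then a * b else 0 :=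
      homogeneousComponent_of_mem hab
    by_contra hne
    rw [this, if_neg hne] at hN
    exact hN rfl
  have htop : homogeneousComponent (m₂ + n₂) (a * b) =
      homogeneousComponent m₂ a * homogeneousComponent n₂ b := by
    rw [key]
    rw [Finset.sum_eq_single_of_mem (m₂, n₂)
      (by simp [Finset.mem_product, Nat.lt_succ_iff, hm2le, hn2le])]
    · rw [if_pos rfl]
    · intro p hmem hne
      obtain ⟨i, j⟩ := p
      simp only at *
      by_cases hij : m₂ + n₂ = i + j
      · rw [if_pos hij]
        have : m₂ < i ∨ n₂ < j := by
          by_contra hc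
          push_neg at hc
          have : i = m₂ ∧ j = n₂ := by omega
          exact hne (by simp [Prod.ext_iff, this.1, this.2])
        rcases this with h | h
        · exact mul_eq_zero_of_left (haSa i (fun hi => absurd (le_csSup hbdda hi) (not_le_of_gt h))) _
        · exact mul_eq_zero_of_right _ (hbSb j (fun hj => absurd (le_csSup hbddb hj) (not_le_of_gt h)))
      · rw [if_neg hij]
  have hbot : homogeneousComponent (m₁ + n₁) (a * b) =
      homogeneousComponent m₁ a * homogeneousComponent n₁ b := by
    rw [key]
    rw [Finset.sum_eq_single_of_mem (m₁, n₁)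
      (by
        simp only [Finset.mem_product, Finset.mem_range, Nat.lt_succ_iff]
        constructor
        · exact le_trans (Nat.sInf_le hm2) hm2le
        · exact le_trans (Nat.sInf_le hn2) hn2le)]
    · rw [if_pos rfl]
    · intro p hmem hne
      obtain ⟨i, j⟩ := p
      simp only at *
      by_cases hij : m₁ + n₁ = i + j
      · rw [if_pos hij]
        have : i < m₁ ∨ j < n₁ := by
          by_contra hc
          push_neg at hc
          have : i = m₁ ∧ j = n₁ := by omega
          exact hne (by simp [Prod.ext_iff, this.1, this.2])
        rcases this with h | h
        · exact mul_eq_zero_of_left (haSa i (fun hi => absurd (Nat.sInf_le hi) (not_le_of_gt h))) _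
        · exact mul_eq_zero_of_right _ (hbSb j (fun hj => absurd (Nat.sInf_le hj) (not_le_of_gt h)))
      · rw [if_neg hij]
  have htopne : homogeneousComponent m₂ a * homogeneousComponent n₂ b ≠ 0 :=
    mul_ne_zero hm2 hn2
  have hbotne : homogeneousComponent m₁ a * homogeneousComponent n₁ b ≠ 0 :=
    mul_ne_zero hm1 hn1
  have e1 : m₂ + n₂ = n := habmem _ (htop ▸ htopne)
  have e2 : m₁ + n₁ = n := habmem _ (hbot ▸ hbotne)
  have hm12 : m₁ ≤ m₂ := Nat.sInf_le hm2
  have hn12 : n₁ ≤ n₂ := Nat.sInf_le hn2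
  have hmeq : m₁ = m₂ := by omega
  have hneq : n₁ = n₂ := by omega
  have haeq : a = homogeneousComponent m₂ a := by
    conv_lhs => rw [← sum_homogeneousComponent a]
    rw [Finset.sum_eq_single_of_mem m₂ (by simp [Nat.lt_succ_iff, hm2le])]
    intro i _ hne
    apply haSa
    intro hi
    exact hne (le_antisymm (le_csSup hbdda hi) (hmeq ▸ Nat.sInf_le hi))
  have hbeq : b = homogeneousComponent n₂ b := by
    conv_lhs => rw [← sum_homogeneousComponent b]
    rw [Finset.sum_eq_single_of_mem n₂ (by simp [Nat.lt_succ_iff, hn2le])]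
    intro i _ hne
    apply hbSb
    intro hi
    exact hne (le_antisymm (le_csSup hbddb hi) (hneq ▸ Nat.sInf_le hi))
  have haH : a.IsHomogeneous m₂ := haeq ▸ homogeneousComponent_isHomogeneous m₂ a
  have hbH : b.IsHomogeneous n₂ := hbeq ▸ homogeneousComponent_isHomogeneous n₂ b
  have hta : a.totalDegree = m₂ := haH.totalDegree ha
  have htb : b.totalDegree = n₂ := hbH.totalDegree hb
  exact ⟨hta ▸ haH, htb ▸ hbH, by omega⟩

/-- Let `W ⊆ V` be a subspace and `U ⊆ P(V)` locally closed with
`U ∩ P(W)` nonempty and open in `P(W)`.  If `φ : U → P^m` is a homogeneous morphism with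
defining system `(f₀, …, f_m)` of homogeneous polynomials of degree `d`, then
`deg (φ|_{U ∩ P(W)}) = d − deg (gcd (f₀|_W, …, f_m|_W))`. -/
theorem statement15
    (k : Type) [Field k] [IsAlgClosed k]
    (V : Type) [AddCommGroup V] [Module k V] [FiniteDimensional k V]
    (W : Submodule k V)
    (U : Set (Projectivization k V)) (hU : @IsLocallyClosed _ (projTop k V) U)
    (hne : (U ∩ {q | ∃ x, ∃ hx : x ≠ 0, x ∈ W ∧ Projectivization.mk k x hx = q}).Nonempty)
    (hopen : ∃ O : Set (Projectivization k V), @IsOpen _ (projTop k V) O ∧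
      U ∩ {q | ∃ x, ∃ hx : x ≠ 0, x ∈ W ∧ Projectivization.mk k x hx = q} =
        O ∩ {q | ∃ x, ∃ hx : x ≠ 0, x ∈ W ∧ Projectivization.mk k x hx = q})
    (m : ℕ) (φ : ↥U → Projectivization k (Fin (m + 1) → k))
    (d : ℕ) (F : Fin (m + 1) → MvPolynomial (Fin (Module.finrank k V)) k)
    (hFhom : ∀ i, (F i).IsHomogeneous d)
    -- `F` is a defining system for the homogeneous morphism `φ` on `U`
    (hrep : ∀ (x : V) (hx : x ≠ 0) (q : ↥U),
      (q : Projectivization k V) = Projectivization.mk k x hx →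
      ∃ hF : (fun i => polyEval (F i) x) ≠ 0,
        φ q = Projectivization.mk k (fun i => polyEval (F i) x) hF) :
    ∃ r : ℕ,
      -- `r` is the degree of `gcd (f₀|_W, …, f_m|_W)`: there is a common homogeneous divisor
      -- of degree `r` of the restrictions, and no one of larger degree
      (∃ h : MvPolynomial (Fin (Module.finrank k ↥W)) k, h ≠ 0 ∧ h.IsHomogeneous r ∧
        ∀ i, h ∣ resW W (F i)) ∧
      (∀ r' : ℕ, (∃ h : MvPolynomial (Fin (Module.finrank k ↥W)) k,
        h ≠ 0 ∧ h.IsHomogeneous r' ∧ ∀ i, h ∣ resW W (F i)) → r' ≤ r) ∧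
      -- and `φ|_{U ∩ P(W)}` has degree `d − r`: it admits a reduced homogeneous defining
      -- system of degree `d − r` in the coordinates of `W`
      (∃ Fw : Fin (m + 1) → MvPolynomial (Fin (Module.finrank k ↥W)) k,
        (∀ i, (Fw i).IsHomogeneous (d - r)) ∧
        (∀ h : MvPolynomial (Fin (Module.finrank k ↥W)) k, (∀ i, h ∣ Fw i) → IsUnit h) ∧
        ∀ (y : ↥W) (hy : (y : V) ≠ 0) (q : ↥U),
          (q : Projectivization k V) = Projectivization.mk k (y : V) hy →
          ∃ hF : (fun i => MvPolynomial.eval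
              (fun j => (Module.finBasis k ↥W).repr y j) (Fw i)) ≠ 0,
            φ q = Projectivization.mk k
              (fun i => MvPolynomial.eval (fun j => (Module.finBasis k ↥W).repr y j) (Fw i))
              hF) := by
  classical
  -- notation
  set G : Fin (m + 1) → MvPolynomial (Fin (Module.finrank k ↥W)) k :=
    fun i => resW W (F i) with hG
  -- homogeneity of the restrictions
  have hGhom : ∀ i, (G i).IsHomogeneous d := by
    intro i
    have hg : ∀ l : Fin (Module.finrank k V), MvPolynomial.IsHomogeneous
        (∑ j : Fin (Module.finrank k ↥W),
          MvPolynomial.C ((Module.finBasis k V).repr ((Module.finBasis k ↥W j : ↥W) : V) l) *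
            MvPolynomial.X j) 1 := by
      intro l
      refine MvPolynomial.IsHomogeneous.sum _ _ _ fun j _ => ?_
      simpa using (MvPolynomial.isHomogeneous_X k j).C_mul _
    have := (hFhom i).aeval _ hg; rw [one_mul] at this; exact this
  -- the nonempty intersection gives an index with nonzero restriction
  obtain ⟨q0, hq0⟩ := hne
  obtain ⟨x, hx, hxW, hmk⟩ := hq0.2
  obtain ⟨hFne0, -⟩ := hrep x hx ⟨q0, hq0.1⟩ hmk.symm
  obtain ⟨i0, hi0⟩ := Function.ne_iff.mp hFne0
  have hGi0 : G i0 ≠ 0 := by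
    intro hzero
    apply hi0
    show polyEval (F i0) x = (0 : Fin (m + 1) → k) i0
    rw [Pi.zero_apply]
    have h1 := resW_eval W (F i0) ⟨x, hxW⟩
    have h2 : polyEval (F i0) ((⟨x, hxW⟩ : ↥W) : V) = 0 := by
      rw [← h1]
      show MvPolynomial.eval _ (G i0) = 0
      rw [hzero, map_zero]
    exact h2
  -- the set of degrees of common homogeneous divisors
  set Rset : Set ℕ := {r' | ∃ h : MvPolynomial (Fin (Module.finrank k ↥W)) k,
    h ≠ 0 ∧ h.IsHomogeneous r' ∧ ∀ i, h ∣ G i} with hRset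
  have hR0 : (0 : ℕ) ∈ Rset :=
    ⟨1, one_ne_zero, MvPolynomial.isHomogeneous_one _ _, fun i => one_dvd _⟩
  have hRbdd : BddAbove Rset := by
    refine ⟨d, fun r' hr' => ?_⟩
    obtain ⟨h, h0, hhom, hdvd⟩ := hr'
    obtain ⟨c, hc⟩ := hdvd i0
    have hcne : c ≠ 0 := by rintro rfl; rw [mul_zero] at hc; exact hGi0 hc
    obtain ⟨hh, -, hsum⟩ := isHomogeneous_of_mul_aux (hc ▸ hGhom i0) h0 hcne
    rw [hhom.totalDegree h0] at hsum
    omega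
  set r : ℕ := sSup Rset with hr
  have hrmem : r ∈ Rset := Nat.sSup_mem ⟨0, hR0⟩ hRbdd
  obtain ⟨h, h0, hhom, hdvd⟩ := hrmem
  refine ⟨r, ⟨h, h0, hhom, hdvd⟩, fun r' hr' => le_csSup hRbdd hr', ?_⟩
  -- the reduced system
  choose Fw hFw using hdvd
  have hFwhom : ∀ i, (Fw i).IsHomogeneous (d - r) := by
    intro i
    by_cases hGi : G i = 0
    · have hz : Fw i = 0 := by
        have h2 := hFw i
        rw [hGi] at h2
        rcases mul_eq_zero.mp h2.symm with h' | h'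
        · exact absurd h' h0
        · exact h'
      rw [hz]
      exact MvPolynomial.isHomogeneous_zero _ _ _
    · have hFwne : Fw i ≠ 0 := by
        rintro h'
        apply hGi
        rw [hFw i, h', mul_zero]
      obtain ⟨hh, hfac, hsum⟩ := isHomogeneous_of_mul_aux ((hFw i) ▸ hGhom i) h0 hFwne
      rw [hhom.totalDegree h0] at hsum
      have : (Fw i).totalDegree = d - r := by omega
      rwa [this] at hfac
  have hFwi0 : Fw i0 ≠ 0 := by
    rintro h'
    apply hGi0
    rw [hFw i0, h', mul_zero]
  refine ⟨Fw, hFwhom, ?_, ?_⟩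
  · -- reducedness
    intro h' hdvd'
    have h'ne : h' ≠ 0 := by
      rintro rfl
      obtain ⟨c, hc⟩ := hdvd' i0
      rw [zero_mul] at hc
      exact hFwi0 hc
    obtain ⟨c, hc⟩ := hdvd' i0
    have hcne : c ≠ 0 := by rintro rfl; rw [mul_zero] at hc; exact hFwi0 hc
    obtain ⟨hh', -, -⟩ := isHomogeneous_of_mul_aux (hc ▸ hFwhom i0) h'ne hcne
    have hmemR : r + h'.totalDegree ∈ Rset := by
      refine ⟨h * h', mul_ne_zero h0 h'ne, hhom.mul hh', fun i => ?_⟩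
      rw [hFw i]
      exact mul_dvd_mul_left h (hdvd' i)
    have : r + h'.totalDegree ≤ r := le_csSup hRbdd hmemR
    have htd0 : h'.totalDegree = 0 := by omega
    have : h' = MvPolynomial.C (MvPolynomial.coeff 0 h') := by
      have hmem : h' ∈ MvPolynomial.homogeneousSubmodule _ k 0 := htd0 ▸ hh'
      have := MvPolynomial.homogeneousComponent_of_mem (n := 0) (m := 0) hmem
      rw [if_pos rfl] at this
      exact this.symm.trans (MvPolynomial.homogeneousComponent_zero h')
    have hc0 : MvPolynomial.coeff 0 h' ≠ 0 := by
      intro h0'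
      apply h'ne
      rw [this, h0', map_zero]
    rw [this]
    exact (isUnit_iff_ne_zero.mpr hc0).map MvPolynomial.C
  · -- the defining system property
    intro y hy q hq
    set c : Fin (Module.finrank k ↥W) → k :=
      fun j => (Module.finBasis k ↥W).repr y j with hcdef
    obtain ⟨hFne, hφ⟩ := hrep (y : V) hy q hq
    have hkey : ∀ i, polyEval (F i) (y : V) =
        MvPolynomial.eval c h * MvPolynomial.eval c (Fw i) := by
      intro i
      rw [← resW_eval W (F i) y]
      show MvPolynomial.eval _ (G i) = _
      rw [hFw i, map_mul]
    have htne : MvPolynomial.eval c h ≠ 0 := by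
      intro ht
      apply hFne
      funext i
      rw [Pi.zero_apply, hkey i, ht, zero_mul]
    have hFwne : (fun i => MvPolynomial.eval c (Fw i)) ≠ 0 := by
      intro hz
      apply hFne
      funext i
      have : MvPolynomial.eval c (Fw i) = 0 := congrFun hz i
      rw [Pi.zero_apply, hkey i, this, mul_zero]
    refine ⟨hFwne, ?_⟩
    rw [hφ]
    rw [Projectivization.mk_eq_mk_iff]
    refine ⟨Units.mk0 _ htne, ?_⟩
    funext i
    simp only [Units.smul_def, Units.smul_mk0, Pi.smul_apply, smul_eq_mul]
    exact (hkey i).symm
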